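/- (Data projection for the shallow water system.) Let c : ℝ → ℝ be C^{j+1}, let A(σ) = [[0, 1], [c(σ), 0]] and B = [[0, 0], [1, 0]], and let 𝛟 = (φ, ψ)ᵀ : ℝ × ℝ → ℝ² be a C^{j+1} solution of 𝛟_τ + A(σ) 𝛟_σ + B 𝛟 = 0. Let φ₀ : ℝ → ℝ be C^{j+1}, suppose c(σ) φ₀'(σ)² ≠ 1 for all σ, let 𝛟₀(σ) := 𝛟(σ, −φ₀(σ)) with first component equal to φ₀(σ), and define 𝛟_j(σ) := 𝛟₀(σ) + Σ_{k=1}^{j} ((−φ₀(σ))^k / k!) · ({ [I + φ₀'(σ)A(σ)]⁻¹ [A(σ) d/dσ + B] }ᵏ 𝛟₀)(σ). If ε > 0 and for every σ and every s between 0 and −φ₀(σ) one has (|φ₀(σ)|^{j+1}/(j+1)!) · ‖∂^{j+1}𝛟/∂τ^{j+1}(σ, s)‖ < ε, then ‖𝛟(σ, 0) − 𝛟_j(σ)‖ < ε for every σ. -/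

import Mathlib

open Matrix

/-- Matrix-vector multiplication acting on the Euclidean plane `ℝ²`. -/
noncomputable def mulVecE (M : Matrix (Fin 2) (Fin 2) ℝ)
    (v : EuclideanSpace ℝ (Fin 2)) : EuclideanSpace ℝ (Fin 2) :=
  WithLp.toLp 2 (M *ᵥ v)

/-- The time (`τ`) derivative of a function of `(σ, τ)` with values in `ℝ²`. -/
noncomputable def tauDeriv (w : ℝ × ℝ → EuclideanSpace ℝ (Fin 2)) :
    ℝ × ℝ → EuclideanSpace ℝ (Fin 2) :=
  fun p => fderiv ℝ w p (0, 1)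


open Set

section TaylorAux

variable {E : Type*} [NormedAddCommGroup E] [NormedSpace ℝ E]


lemma mvt_poly_aux (g g' : ℝ → E) (hg : ∀ t, HasDerivAt g (g' t) t)
    {a x C : ℝ} (m : ℕ) (hax : a ≤ x) (hC : 0 ≤ C) (hga : g a = 0)
    (h : ∀ t ∈ Icc a x, ‖g' t‖ ≤ C * (t - a) ^ m / m.factorial) :
    ‖g x‖ ≤ C * (x - a) ^ (m + 1) / (m + 1).factorial := by
  have hfac : ((m + 1).factorial : ℝ) = (m + 1) * m.factorial := by
    exact_mod_cast Nat.factorial_succ m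
  have hB : ∀ t : ℝ, HasDerivAt (fun t => C * (t - a) ^ (m + 1) / (m + 1).factorial)
      (C * (t - a) ^ m / m.factorial) t := by
    intro t
    have h1 : HasDerivAt (fun t : ℝ => (t - a) ^ (m + 1))
        ((m + 1 : ℕ) * (t - a) ^ m * 1) t :=
      ((hasDerivAt_id t).sub_const a).pow (m + 1)
    have h2 := h1.const_mul (C / (m + 1).factorial)
    have e1 : (fun y : ℝ => C / ((m + 1).factorial : ℝ) * (y - a) ^ (m + 1))
        = fun t : ℝ => C * (t - a) ^ (m + 1) / (m + 1).factorial := by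
      funext y; ring
    have e2 : C / ((m + 1).factorial : ℝ) * (((m + 1 : ℕ) : ℝ) * (t - a) ^ m * 1)
        = C * (t - a) ^ m / m.factorial := by
      rw [hfac]
      have h0 : (m.factorial : ℝ) ≠ 0 := Nat.cast_ne_zero.2 m.factorial_ne_zero
      have h0' : ((m : ℝ) + 1) ≠ 0 := by positivity
      field_simp
      push_cast
      ring
    rw [e1, e2] at h2
    exact h2
  exact image_norm_le_of_norm_deriv_right_le_deriv_boundary
    (f := g) (f' := g') (a := a) (b := x)
    (Continuous.continuousOn (continuous_iff_continuousAt.2 fun t => (hg t).continuousAt))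
    (fun t _ => (hg t).hasDerivWithinAt)
    (B := fun t => C * (t - a) ^ (m + 1) / (m + 1).factorial)
    (B' := fun t => C * (t - a) ^ m / m.factorial)
    (by simp [hga]) hB
    (fun t ht => h t ⟨ht.1, ht.2.le⟩)
    (right_mem_Icc.2 hax)

/-- Two-sided version with `uIcc` and absolute values. -/
lemma mvt_poly (g g' : ℝ → E) (hg : ∀ t, HasDerivAt g (g' t) t)
    {a x C : ℝ} (m : ℕ) (hC : 0 ≤ C) (hga : g a = 0)
    (h : ∀ t ∈ uIcc a x, ‖g' t‖ ≤ C * |t - a| ^ m / m.factorial) :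
    ‖g x‖ ≤ C * |x - a| ^ (m + 1) / (m + 1).factorial := by
  rcases le_total a x with hax | hxa
  · rw [abs_of_nonneg (sub_nonneg.2 hax)]
    refine mvt_poly_aux g g' hg m hax hC hga fun t ht => ?_
    have := h t (by rw [uIcc_of_le hax]; exact ht)
    rwa [abs_of_nonneg (sub_nonneg.2 ht.1)] at this
  · -- reflect
    set G : ℝ → E := fun t => g (2 * a - t) with hG
    have hG' : ∀ t, HasDerivAt G ((-1 : ℝ) • g' (2 * a - t)) t := by
      intro t
      have hlin : HasDerivAt (fun t : ℝ => 2 * a - t) (-1) t := by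
        exact (hasDerivAt_id' t).const_sub (2 * a)
      exact (hg (2 * a - t)).scomp t hlin
    have hGa : G a = 0 := by
      show g (2 * a - a) = 0
      rw [show 2 * a - a = a by ring, hga]
    have hb : ∀ t ∈ Icc a (2 * a - x),
        ‖(-1 : ℝ) • g' (2 * a - t)‖ ≤ C * (t - a) ^ m / m.factorial := by
      intro t ht
      have hmem : 2 * a - t ∈ uIcc a x := by
        rw [uIcc_of_ge hxa]
        constructor
        · linarith [ht.2]
        · linarith [ht.1]
      have hh := h _ hmem
      rw [norm_smul]
      simp only [norm_neg, norm_one, Real.norm_eq_abs, abs_neg, abs_one, one_mul]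
      have habs : |2 * a - t - a| = t - a := by
        rw [abs_of_nonpos (by linarith [ht.1])]; ring
      rwa [habs] at hh
    have key := mvt_poly_aux G (fun t => (-1 : ℝ) • g' (2 * a - t)) hG' m
      (by linarith : a ≤ 2 * a - x) hC hGa hb
    have e1 : G (2 * a - x) = g x := by
      show g (2 * a - (2 * a - x)) = g x
      rw [show 2 * a - (2 * a - x) = x by ring]
    rw [e1] at key
    have e2 : |x - a| = (2 * a - x) - a := by
      rw [abs_of_nonpos (by linarith)]; ring
    rw [e2]
    exact key

lemma contDiff_deriv_nat {f : ℝ → E} {n : ℕ} (hf : ContDiff ℝ ((n + 1 : ℕ) : WithTop ℕ∞) f) :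
    ContDiff ℝ ((n : ℕ) : WithTop ℕ∞) (deriv f) := by
  simpa using ContDiff.iterate_deriv' n 1 hf

lemma taylor_poly_hasDerivAt (f : ℝ → E) (hf : Differentiable ℝ f) (a : ℝ) (n : ℕ) (t : ℝ) :
    HasDerivAt (fun t => f t -
        ∑ k ∈ Finset.range (n + 1), ((t - a) ^ k / k.factorial) • iteratedDeriv k f a)
      (deriv f t -
        ∑ k ∈ Finset.range n, ((t - a) ^ k / k.factorial) • iteratedDeriv (k + 1) f a) t := by
  have hterm : ∀ k : ℕ, HasDerivAt
      (fun t : ℝ => ((t - a) ^ k / k.factorial) • iteratedDeriv k f a)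
      (((1 / k.factorial : ℝ) * ((k : ℝ) * (t - a) ^ (k - 1) * 1)) • iteratedDeriv k f a) t := by
    intro k
    have h1 : HasDerivAt (fun t : ℝ => (t - a) ^ k) ((k : ℝ) * (t - a) ^ (k - 1) * 1) t :=
      ((hasDerivAt_id t).sub_const a).pow k
    have h2 := (h1.const_mul (1 / k.factorial : ℝ)).smul_const (iteratedDeriv k f a)
    have e1 : (fun y : ℝ => (1 / (k.factorial : ℝ) * (y - a) ^ k) • iteratedDeriv k f a)
        = fun y : ℝ => ((y - a) ^ k / k.factorial) • iteratedDeriv k f a := by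
      funext y
      congr 1
      ring
    rw [e1] at h2
    exact h2
  have hsum := HasDerivAt.fun_sum (fun k _ => hterm k) (u := Finset.range (n + 1))
  have hval : ∑ k ∈ Finset.range (n + 1),
      ((1 / k.factorial : ℝ) * ((k : ℝ) * (t - a) ^ (k - 1) * 1)) • iteratedDeriv k f a
      = ∑ k ∈ Finset.range n, ((t - a) ^ k / k.factorial) • iteratedDeriv (k + 1) f a := by
    rw [Finset.sum_range_succ']
    simp only [Nat.cast_zero, zero_mul, mul_zero, zero_smul, zero_mul, add_zero,
      Nat.cast_succ, Nat.add_sub_cancel]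
    apply Finset.sum_congr rfl
    intro k _
    congr 1
    have hfac : ((k + 1).factorial : ℝ) = (k + 1) * k.factorial := by
      exact_mod_cast Nat.factorial_succ k
    rw [hfac]
    have h0 : (k.factorial : ℝ) ≠ 0 := Nat.cast_ne_zero.2 k.factorial_ne_zero
    field_simp
  rw [hval] at hsum
  exact (hf t).hasDerivAt.sub hsum

lemma taylor_poly_at_center (f : ℝ → E) (a : ℝ) (n : ℕ) :
    ∑ k ∈ Finset.range (n + 1), ((a - a) ^ k / k.factorial) • iteratedDeriv k f a = f a := by
  rw [Finset.sum_eq_single_of_mem 0 (Finset.mem_range.2 (Nat.succ_pos n))]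
  · simp
  · intro k _ hk
    simp [sub_self, zero_pow hk]

/-- Global Taylor theorem with Lagrange-type remainder bound. -/
lemma taylor_bound_global : ∀ (n : ℕ) (f : ℝ → E), ContDiff ℝ ((n + 1 : ℕ) : WithTop ℕ∞) f →
    ∀ (a x C : ℝ), 0 ≤ C → (∀ y ∈ uIcc a x, ‖iteratedDeriv (n + 1) f y‖ ≤ C) →
    ‖f x - ∑ k ∈ Finset.range (n + 1), ((x - a) ^ k / k.factorial) • iteratedDeriv k f a‖
      ≤ C * |x - a| ^ (n + 1) / (n + 1).factorial := by
  intro n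
  induction n with
  | zero =>
    intro f hf a x C hC hb
    have hdiff : Differentiable ℝ f := hf.differentiable (by simp)
    refine mvt_poly _ _ (taylor_poly_hasDerivAt f hdiff a 0) 0 hC
      (by rw [taylor_poly_at_center]; simp) fun t ht => ?_
    simpa using hb t ht
  | succ n IH =>
    intro f hf a x C hC hb
    have hdiff : Differentiable ℝ f := hf.differentiable (by simp)
    have hf' : ContDiff ℝ ((n + 1 : ℕ) : WithTop ℕ∞) (deriv f) := contDiff_deriv_nat hf
    refine mvt_poly _ _ (taylor_poly_hasDerivAt f hdiff a (n + 1)) (n + 1) hC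
      (by rw [taylor_poly_at_center]; simp) fun t ht => ?_
    have hIH := IH (deriv f) hf' a t C hC (fun y hy => by
      rw [← iteratedDeriv_succ']
      exact hb y (uIcc_subset_uIcc left_mem_uIcc ht hy))
    calc ‖deriv f t - ∑ k ∈ Finset.range (n + 1),
          ((t - a) ^ k / k.factorial) • iteratedDeriv (k + 1) f a‖
        = ‖deriv f t - ∑ k ∈ Finset.range (n + 1),
          ((t - a) ^ k / k.factorial) • iteratedDeriv k (deriv f) a‖ := by
          congr 1; rw [sub_right_inj]; apply Finset.sum_congr rfl; intro k _
          rw [iteratedDeriv_succ']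
      _ ≤ C * |t - a| ^ (n + 1) / (n + 1).factorial := hIH

end TaylorAux

noncomputable def mulVecL (M : Matrix (Fin 2) (Fin 2) ℝ) :
    EuclideanSpace ℝ (Fin 2) →L[ℝ] EuclideanSpace ℝ (Fin 2) :=
  LinearMap.toContinuousLinearMap
    { toFun := fun v => mulVecE M v
      map_add' := fun u v => by simp only [mulVecE, WithLp.ofLp_add, Matrix.mulVec_add, WithLp.toLp_add]
      map_smul' := fun r v => by simp only [mulVecE, WithLp.ofLp_smul, Matrix.mulVec_smul, WithLp.toLp_smul, RingHom.id_apply] }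

@[simp] lemma mulVecL_apply (M : Matrix (Fin 2) (Fin 2) ℝ) (v : EuclideanSpace ℝ (Fin 2)) :
    mulVecL M v = mulVecE M v := rfl

lemma mulVecE_add (M : Matrix (Fin 2) (Fin 2) ℝ) (u v : EuclideanSpace ℝ (Fin 2)) :
    mulVecE M (u + v) = mulVecE M u + mulVecE M v := by simp only [mulVecE, WithLp.ofLp_add, Matrix.mulVec_add, WithLp.toLp_add]

lemma mulVecE_smul (M : Matrix (Fin 2) (Fin 2) ℝ) (r : ℝ) (v : EuclideanSpace ℝ (Fin 2)) :
    mulVecE M (r • v) = r • mulVecE M v := by simp only [mulVecE, WithLp.ofLp_smul, Matrix.mulVec_smul, WithLp.toLp_smul]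

lemma tauDeriv_contDiff {w : ℝ × ℝ → EuclideanSpace ℝ (Fin 2)} {m : ℕ}
    (hw : ContDiff ℝ ((m + 1 : ℕ) : WithTop ℕ∞) w) :
    ContDiff ℝ ((m : ℕ) : WithTop ℕ∞) (tauDeriv w) := by
  have h1 : ContDiff ℝ ((m : ℕ) : WithTop ℕ∞) (fderiv ℝ w) :=
    hw.fderiv_right (by exact_mod_cast le_refl (m + 1 : ℕ))
  exact h1.clm_apply contDiff_const

lemma tauDeriv_iter_contDiff {w : ℝ × ℝ → EuclideanSpace ℝ (Fin 2)} (m k : ℕ) :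
    ContDiff ℝ ((m + k : ℕ) : WithTop ℕ∞) w →
      ContDiff ℝ ((m : ℕ) : WithTop ℕ∞) (tauDeriv^[k] w) := by
  induction k generalizing w with
  | zero => intro hw; simpa using hw
  | succ k IH =>
    intro hw
    rw [Function.iterate_succ_apply]
    refine IH ?_
    have : ContDiff ℝ (((m + k) + 1 : ℕ) : WithTop ℕ∞) w := by
      rwa [show m + (k + 1) = (m + k) + 1 from by omega] at hw
    exact tauDeriv_contDiff this

lemma hasDerivAt_slice {w : ℝ × ℝ → EuclideanSpace ℝ (Fin 2)} {σ t : ℝ}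
    (hw : DifferentiableAt ℝ w (σ, t)) :
    HasDerivAt (fun t => w (σ, t)) (fderiv ℝ w (σ, t) (0, 1)) t := by
  have hc : HasDerivAt (fun t : ℝ => ((σ, t) : ℝ × ℝ)) ((0 : ℝ), (1 : ℝ)) t :=
    (hasDerivAt_const t σ).prodMk (hasDerivAt_id t)
  exact (hw.hasFDerivAt.comp_hasDerivAt t hc)

lemma iteratedDeriv_slice : ∀ (k : ℕ) (w : ℝ × ℝ → EuclideanSpace ℝ (Fin 2)),
    ContDiff ℝ ((k : ℕ) : WithTop ℕ∞) w → ∀ (σ t : ℝ),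
    iteratedDeriv k (fun t => w (σ, t)) t = (tauDeriv^[k] w) (σ, t) := by
  intro k
  induction k with
  | zero => intro w _ σ t; simp
  | succ k IH =>
    intro w hw σ t
    rw [iteratedDeriv_succ']
    have hdw : Differentiable ℝ w := hw.differentiable (by simp)
    have hderiv : deriv (fun t => w (σ, t)) = fun t => tauDeriv w (σ, t) := by
      funext s
      exact (hasDerivAt_slice (hdw.differentiableAt)).deriv
    have htd : ContDiff ℝ ((k : ℕ) : WithTop ℕ∞) (tauDeriv w) :=
      tauDeriv_contDiff (w := w) (m := k) hw
    rw [hderiv, IH (tauDeriv w) htd σ t, ← Function.iterate_succ_apply]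

noncomputable abbrev evalL (v : ℝ × ℝ) :
    ((ℝ × ℝ) →L[ℝ] EuclideanSpace ℝ (Fin 2)) →L[ℝ] EuclideanSpace ℝ (Fin 2) :=
  ContinuousLinearMap.apply ℝ (EuclideanSpace ℝ (Fin 2)) v

lemma fderiv_eval_dir {W : ℝ × ℝ → EuclideanSpace ℝ (Fin 2)} {p : ℝ × ℝ}
    (hW' : DifferentiableAt ℝ (fderiv ℝ W) p) (v u : ℝ × ℝ) :
    HasFDerivAt (fun q => fderiv ℝ W q v)
      ((evalL v).comp (fderiv ℝ (fderiv ℝ W) p)) p :=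
  (evalL v).hasFDerivAt.comp p hW'.hasFDerivAt

lemma pde_iter (j : ℕ) (c : ℝ → ℝ)
    (Φ : ℝ × ℝ → EuclideanSpace ℝ (Fin 2))
    (hΦ : ContDiff ℝ (((j + 1 : ℕ)) : WithTop ℕ∞) Φ)
    (hsol : ∀ σ τ : ℝ,
      fderiv ℝ Φ (σ, τ) (0, 1)
        + mulVecE (!![0, 1; c σ, 0] : Matrix (Fin 2) (Fin 2) ℝ) (fderiv ℝ Φ (σ, τ) (1, 0))
        + mulVecE (!![0, 0; 1, 0] : Matrix (Fin 2) (Fin 2) ℝ) (Φ (σ, τ)) = 0) :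
    ∀ k : ℕ, k ≤ j → ∀ σ τ : ℝ,
      fderiv ℝ (tauDeriv^[k] Φ) (σ, τ) (0, 1)
        + mulVecE (!![0, 1; c σ, 0]) (fderiv ℝ (tauDeriv^[k] Φ) (σ, τ) (1, 0))
        + mulVecE (!![0, 0; 1, 0]) ((tauDeriv^[k] Φ) (σ, τ)) = 0 := by
  intro k
  induction k with
  | zero => intro _ σ τ; simpa using hsol σ τ
  | succ k IH =>
    intro hk σ τ
    have hkj : k ≤ j := Nat.le_of_succ_le hk
    set W := tauDeriv^[k] Φ with hWdef
    set p : ℝ × ℝ := (σ, τ) with hp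
    -- W is C²
    have hW2 : ContDiff ℝ ((2 : ℕ) : WithTop ℕ∞) W := by
      refine tauDeriv_iter_contDiff 2 k (hΦ.of_le ?_)
      exact_mod_cast (by omega : 2 + k ≤ j + 1)
    have hWd : Differentiable ℝ W := hW2.differentiable (by simp)
    have hW' : ContDiff ℝ ((1 : ℕ) : WithTop ℕ∞) (fderiv ℝ W) :=
      hW2.fderiv_right (by exact_mod_cast le_refl (2 : ℕ))
    have hW'd : Differentiable ℝ (fderiv ℝ W) :=
      hW'.differentiable (by simp)
    set H := fderiv ℝ (fderiv ℝ W) p with hH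
    have hsymm : ∀ v u : ℝ × ℝ, H v u = H u v :=
      second_derivative_symmetric (fun y => (hWd y).hasFDerivAt) ((hW'd p).hasFDerivAt)
    set V := tauDeriv W with hV
    have hVit : tauDeriv^[k + 1] Φ = V := by
      rw [Function.iterate_succ_apply']
    -- fderiv of V
    have hVf : HasFDerivAt V ((evalL (0, 1)).comp H) p :=
      fderiv_eval_dir (hW'd p) _ (0, 1)
    have hVfd : fderiv ℝ V p = (evalL (0, 1)).comp H := hVf.fderiv
    -- derivative of the slice of V, computed two ways
    have hslice1 : HasDerivAt (fun t => V (σ, t)) (fderiv ℝ V p (0, 1)) τ :=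
      hasDerivAt_slice hVf.differentiableAt
    -- second way: V = -(A *ᵥ ∂σ W + B *ᵥ W)
    have hVeq : (fun t => V (σ, t)) = fun t =>
        -(mulVecE (!![0, 1; c σ, 0]) (fderiv ℝ W (σ, t) (1, 0))
          + mulVecE (!![0, 0; 1, 0]) (W (σ, t))) := by
      funext t
      have h0 := IH hkj σ t
      have : V (σ, t) = fderiv ℝ W (σ, t) (0, 1) := rfl
      rw [this]
      linear_combination (norm := module) h0
    have hU : HasDerivAt (fun t => fderiv ℝ W (σ, t) (1, 0)) (H (0, 1) (1, 0)) τ := by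
      have hUf : HasFDerivAt (fun q => fderiv ℝ W q (1, 0)) ((evalL (1, 0)).comp H) p :=
        fderiv_eval_dir (hW'd p) _ (1, 0)
      have := hasDerivAt_slice (w := fun q => fderiv ℝ W q (1, 0)) (σ := σ) (t := τ)
        hUf.differentiableAt
      rwa [hUf.fderiv] at this
    have hWslice : HasDerivAt (fun t => W (σ, t)) (V p) τ :=
      hasDerivAt_slice (hWd p)
    have hslice2 : HasDerivAt (fun t => V (σ, t))
        (-(mulVecE (!![0, 1; c σ, 0]) (H (0, 1) (1, 0))
          + mulVecE (!![0, 0; 1, 0]) (V p))) τ := by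
      rw [hVeq]
      exact ((((mulVecL (!![0, 1; c σ, 0])).hasFDerivAt.comp_hasDerivAt τ hU)).add
        (((mulVecL (!![0, 0; 1, 0])).hasFDerivAt.comp_hasDerivAt τ hWslice))).neg
    have huniq := hslice1.unique hslice2
    -- assemble
    rw [hVit]
    have h10 : fderiv ℝ V p (1, 0) = H (0, 1) (1, 0) := by
      rw [hVfd]
      exact hsymm (1, 0) (0, 1)
    rw [huniq, h10]
    abel


/-- The data-projection operator `v ↦ [I + φ₀'(σ) A(σ)]⁻¹ [A(σ) d/dσ + B] v` for the
Carrier–Greenspan system, with `A σ = [[0, 1], [c σ, 0]]` and `B = [[0, 0], [1, 0]]`. -/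
noncomputable def cgProjOp (c φ₀ : ℝ → ℝ) (v : ℝ → EuclideanSpace ℝ (Fin 2)) :
    ℝ → EuclideanSpace ℝ (Fin 2) :=
  fun σ => mulVecE ((1 + deriv φ₀ σ • (!![0, 1; c σ, 0] : Matrix (Fin 2) (Fin 2) ℝ))⁻¹)
    (mulVecE (!![0, 1; c σ, 0] : Matrix (Fin 2) (Fin 2) ℝ) (deriv v σ)
      + mulVecE (!![0, 0; 1, 0] : Matrix (Fin 2) (Fin 2) ℝ) (v σ))

/-- **data projection for the shallow water system.**
Let `𝛟 = (φ, ψ)ᵀ` be a `C^{j+1}` solution of the Carrier–Greenspan system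
`𝛟_τ + A(σ) 𝛟_σ + B 𝛟 = 0` with `A σ = [[0, 1], [c σ, 0]]`, `B = [[0, 0], [1, 0]]`.
Let `φ₀` be `C^{j+1}` with `c σ ⬝ φ₀'(σ)² ≠ 1` for all `σ` (non-breaking condition),
let `𝛟₀ σ = 𝛟 (σ, -φ₀ σ)` (whose first component is `φ₀ σ`), and define
`𝛟_j σ = 𝛟₀ σ + ∑_{k=1}^{j} ((-φ₀ σ)^k/k!) ({[I + φ₀' A]⁻¹ [A d/dσ + B]}^k 𝛟₀) σ`.
If `ε > 0` and `(|φ₀ σ|^{j+1}/(j+1)!) ‖∂^{j+1}𝛟/∂τ^{j+1}(σ, s)‖ < ε` for all `σ` and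
all `s` between `0` and `-φ₀ σ`, then `‖𝛟 (σ, 0) - 𝛟_j σ‖ < ε` for every `σ`. -/

lemma inv_cancel_vec {c φ₀ : ℝ → ℝ} (hnonchar : ∀ σ : ℝ, c σ * (deriv φ₀ σ) ^ 2 ≠ 1)
    (σ : ℝ) (v : EuclideanSpace ℝ (Fin 2)) :
    mulVecE ((1 + deriv φ₀ σ • (!![0, 1; c σ, 0] : Matrix (Fin 2) (Fin 2) ℝ))⁻¹)
      (mulVecE (1 + deriv φ₀ σ • (!![0, 1; c σ, 0] : Matrix (Fin 2) (Fin 2) ℝ)) v) = v := by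
  set d := deriv φ₀ σ
  set M : Matrix (Fin 2) (Fin 2) ℝ := 1 + d • (!![0, 1; c σ, 0]) with hM
  have hdet : M.det ≠ 0 := by
    have : M.det = 1 - c σ * d ^ 2 := by
      simp [hM, Matrix.det_fin_two, Matrix.add_apply, Matrix.smul_apply, Matrix.one_apply]
      ring
    rw [this]
    intro h
    exact hnonchar σ (by linarith)
  have hMM : M⁻¹ * M = 1 := Matrix.nonsing_inv_mul M (isUnit_iff_ne_zero.2 hdet)
  simp only [mulVecE, WithLp.ofLp_toLp, Matrix.mulVec_mulVec, hMM, Matrix.one_mulVec]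

lemma expand_M_vec (c φ₀ : ℝ → ℝ) (σ : ℝ) (v : EuclideanSpace ℝ (Fin 2)) :
    mulVecE (1 + deriv φ₀ σ • (!![0, 1; c σ, 0] : Matrix (Fin 2) (Fin 2) ℝ)) v
      = v + deriv φ₀ σ • mulVecE (!![0, 1; c σ, 0]) v := by
  have key : ∀ u : Fin 2 → ℝ,
      (1 + deriv φ₀ σ • (!![0, 1; c σ, 0] : Matrix (Fin 2) (Fin 2) ℝ)) *ᵥ u
        = u + deriv φ₀ σ • ((!![0, 1; c σ, 0] : Matrix (Fin 2) (Fin 2) ℝ) *ᵥ u) := by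
    intro u
    rw [Matrix.add_mulVec, Matrix.one_mulVec, Matrix.smul_mulVec]
  unfold mulVecE
  rw [key]
  rfl

lemma proj_iter (j : ℕ) (c : ℝ → ℝ)
    (Φ : ℝ × ℝ → EuclideanSpace ℝ (Fin 2))
    (hΦ : ContDiff ℝ (((j + 1 : ℕ)) : WithTop ℕ∞) Φ)
    (hsol : ∀ σ τ : ℝ,
      fderiv ℝ Φ (σ, τ) (0, 1)
        + mulVecE (!![0, 1; c σ, 0] : Matrix (Fin 2) (Fin 2) ℝ) (fderiv ℝ Φ (σ, τ) (1, 0))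
        + mulVecE (!![0, 0; 1, 0] : Matrix (Fin 2) (Fin 2) ℝ) (Φ (σ, τ)) = 0)
    (φ₀ : ℝ → ℝ) (hφ₀ : ContDiff ℝ (((j + 1 : ℕ)) : WithTop ℕ∞) φ₀)
    (hnonchar : ∀ σ : ℝ, c σ * (deriv φ₀ σ) ^ 2 ≠ 1)
    (Φ₀ : ℝ → EuclideanSpace ℝ (Fin 2)) (hΦ₀ : ∀ σ : ℝ, Φ₀ σ = Φ (σ, -φ₀ σ)) :
    ∀ k : ℕ, k ≤ j → ∀ σ : ℝ,
      ((cgProjOp c φ₀)^[k] Φ₀) σ = ((-1 : ℝ)) ^ k • (tauDeriv^[k] Φ) (σ, -φ₀ σ) := by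
  intro k
  induction k with
  | zero => intro _ σ; simpa using hΦ₀ σ
  | succ k IH =>
    intro hk σ
    have hkj : k ≤ j := Nat.le_of_succ_le hk
    set W := tauDeriv^[k] Φ with hWdef
    have hW1 : ContDiff ℝ ((1 : ℕ) : WithTop ℕ∞) W := by
      refine tauDeriv_iter_contDiff 1 k (hΦ.of_le ?_)
      exact_mod_cast (by omega : 1 + k ≤ j + 1)
    have hWd : Differentiable ℝ W := hW1.differentiable (by simp)
    have hφ₀d : Differentiable ℝ φ₀ := hφ₀.differentiable (by simp)
    set d := deriv φ₀ σ with hd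
    set pσ : ℝ × ℝ := (σ, -φ₀ σ) with hpσ
    set Gk := (cgProjOp c φ₀)^[k] Φ₀ with hGk
    have hGkeq : Gk = fun σ => ((-1 : ℝ)) ^ k • W (σ, -φ₀ σ) := funext (IH hkj)
    -- derivative of Gk
    have hcurve : HasDerivAt (fun σ : ℝ => ((σ, -φ₀ σ) : ℝ × ℝ)) ((1 : ℝ), -d) σ :=
      (hasDerivAt_id σ).prodMk ((hφ₀d σ).hasDerivAt.neg)
    have hWcurve : HasDerivAt (fun σ => W (σ, -φ₀ σ)) (fderiv ℝ W pσ (1, -d)) σ :=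
      (hWd pσ).hasFDerivAt.comp_hasDerivAt σ hcurve
    have hGd : deriv Gk σ = ((-1 : ℝ)) ^ k • fderiv ℝ W pσ (1, -d) := by
      rw [hGkeq]
      exact (hWcurve.const_smul (((-1 : ℝ)) ^ k)).deriv
    -- decompose direction
    have hdir : fderiv ℝ W pσ (1, -d)
        = fderiv ℝ W pσ (1, 0) + (-d) • fderiv ℝ W pσ (0, 1) := by
      rw [← (fderiv ℝ W pσ).map_smul, ← (fderiv ℝ W pσ).map_add]
      congr 1
      simp [Prod.ext_iff]
    -- the PDE on the curve
    have hpde := pde_iter j c Φ hΦ hsol k hkj σ (-φ₀ σ)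
    set Vp := fderiv ℝ W pσ (0, 1) with hVp
    -- main computation
    have hstep : ((cgProjOp c φ₀)^[k + 1] Φ₀) σ
        = mulVecE ((1 + d • (!![0, 1; c σ, 0] : Matrix (Fin 2) (Fin 2) ℝ))⁻¹)
          (mulVecE (!![0, 1; c σ, 0]) (deriv Gk σ) + mulVecE (!![0, 0; 1, 0]) (Gk σ)) := by
      rw [Function.iterate_succ_apply']
      rfl
    have hX : mulVecE (!![0, 1; c σ, 0]) (deriv Gk σ) + mulVecE (!![0, 0; 1, 0]) (Gk σ)
        = ((-1 : ℝ)) ^ (k + 1) •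
          mulVecE (1 + d • (!![0, 1; c σ, 0] : Matrix (Fin 2) (Fin 2) ℝ)) Vp := by
      rw [hGd, hdir, expand_M_vec, mulVecE_smul, mulVecE_add, mulVecE_smul]
      have hGkσ : Gk σ = ((-1 : ℝ)) ^ k • W pσ := IH hkj σ
      rw [hGkσ, mulVecE_smul]
      have hpde' : mulVecE (!![0, 1; c σ, 0]) (fderiv ℝ W pσ (1, 0))
          + mulVecE (!![0, 0; 1, 0]) (W pσ) = -Vp := by
        linear_combination (norm := module) hpde
      have hpow : ((-1 : ℝ)) ^ (k + 1) = -((-1 : ℝ)) ^ k := by ring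
      rw [hpow]
      linear_combination (norm := module) ((-1 : ℝ)) ^ k • hpde'
    rw [hstep, hX, mulVecE_smul, inv_cancel_vec hnonchar σ Vp]
    congr 1
    rw [Function.iterate_succ_apply']
    rfl

theorem data_projection_shallow_water
    (j : ℕ) (c : ℝ → ℝ) (hc : ContDiff ℝ ((j : ℕ∞) + 1) c)
    (Φ : ℝ × ℝ → EuclideanSpace ℝ (Fin 2))
    (hΦ : ContDiff ℝ ((j : ℕ∞) + 1) Φ)
    (hsol : ∀ σ τ : ℝ,
      fderiv ℝ Φ (σ, τ) (0, 1)
        + mulVecE (!![0, 1; c σ, 0] : Matrix (Fin 2) (Fin 2) ℝ) (fderiv ℝ Φ (σ, τ) (1, 0))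
        + mulVecE (!![0, 0; 1, 0] : Matrix (Fin 2) (Fin 2) ℝ) (Φ (σ, τ)) = 0)
    (φ₀ : ℝ → ℝ) (hφ₀ : ContDiff ℝ ((j : ℕ∞) + 1) φ₀)
    (hnonchar : ∀ σ : ℝ, c σ * (deriv φ₀ σ) ^ 2 ≠ 1)
    (Φ₀ : ℝ → EuclideanSpace ℝ (Fin 2)) (hΦ₀ : ∀ σ : ℝ, Φ₀ σ = Φ (σ, -φ₀ σ))
    (hfirst : ∀ σ : ℝ, Φ₀ σ 0 = φ₀ σ)
    (ε : ℝ) (hε : 0 < ε)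
    (hbound : ∀ σ : ℝ, ∀ s ∈ Set.uIcc (0 : ℝ) (-φ₀ σ),
      (|φ₀ σ| ^ (j + 1) / (Nat.factorial (j + 1) : ℝ)) *
          ‖(tauDeriv^[j + 1] Φ) (σ, s)‖ < ε) :
    ∀ σ : ℝ,
      ‖Φ (σ, 0) - (Φ₀ σ + ∑ k ∈ Finset.Icc 1 j,
          ((-φ₀ σ) ^ k / (Nat.factorial k : ℝ)) • ((cgProjOp c φ₀)^[k] Φ₀) σ)‖ < ε := by

  have hΦn : ContDiff ℝ (((j + 1 : ℕ)) : WithTop ℕ∞) Φ := by exact_mod_cast hΦ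
  have hφ₀n : ContDiff ℝ (((j + 1 : ℕ)) : WithTop ℕ∞) φ₀ := by exact_mod_cast hφ₀
  intro σ
  set a : ℝ := -φ₀ σ with ha
  set f : ℝ → EuclideanSpace ℝ (Fin 2) := fun t => Φ (σ, t) with hfdef
  have hf : ContDiff ℝ (((j + 1 : ℕ)) : WithTop ℕ∞) f :=
    hΦn.comp (contDiff_const.prodMk contDiff_id)
  have hiter : ∀ k : ℕ, k ≤ j + 1 → ∀ t : ℝ,
      iteratedDeriv k f t = (tauDeriv^[k] Φ) (σ, t) := by
    intro k hk t
    exact iteratedDeriv_slice k Φ (hΦn.of_le (by exact_mod_cast hk)) σ t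
  -- maximize the last derivative on the interval
  have hcont : ContinuousOn (fun s : ℝ => ‖(tauDeriv^[j + 1] Φ) (σ, s)‖) (Set.uIcc 0 a) := by
    have h0 : ContDiff ℝ ((0 : ℕ) : WithTop ℕ∞) (tauDeriv^[j + 1] Φ) := by
      refine tauDeriv_iter_contDiff 0 (j + 1) ?_
      rwa [show 0 + (j + 1) = j + 1 from by omega]
    have : Continuous (tauDeriv^[j + 1] Φ) := h0.continuous
    exact ((this.comp (continuous_const.prodMk continuous_id)).norm).continuousOn
  obtain ⟨s₀, hs₀, hmax⟩ := isCompact_uIcc.exists_isMaxOn Set.nonempty_uIcc hcont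
  set C : ℝ := ‖(tauDeriv^[j + 1] Φ) (σ, s₀)‖ with hC
  have hC0 : 0 ≤ C := norm_nonneg _
  have hCb : ∀ y ∈ Set.uIcc a 0, ‖iteratedDeriv (j + 1) f y‖ ≤ C := by
    intro y hy
    rw [hiter (j + 1) le_rfl]
    exact hmax (by rwa [Set.uIcc_comm] at hy)
  have htaylor := taylor_bound_global j f hf a 0 C hC0 hCb
  -- the strict bound
  have hstrict : C * |0 - a| ^ (j + 1) / (j + 1).factorial < ε := by
    have hb := hbound σ s₀ hs₀
    have : |0 - a| = |φ₀ σ| := by rw [ha]; rw [abs_sub_comm]; simp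
    rw [this]
    calc C * |φ₀ σ| ^ (j + 1) / (j + 1).factorial
        = (|φ₀ σ| ^ (j + 1) / (Nat.factorial (j + 1) : ℝ)) * C := by ring
      _ < ε := hb
  -- identify the sums
  have hsum : ∑ k ∈ Finset.range (j + 1), ((0 - a) ^ k / k.factorial) • iteratedDeriv k f a
      = Φ₀ σ + ∑ k ∈ Finset.Icc 1 j,
        ((-φ₀ σ) ^ k / (Nat.factorial k : ℝ)) • ((cgProjOp c φ₀)^[k] Φ₀) σ := by
    rw [Finset.range_eq_Ico, Finset.sum_eq_sum_Ico_succ_bot (Nat.succ_pos j)]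
    congr 1
    · rw [hiter 0 (by omega) a]
      simp [hΦ₀ σ, ha]
    · rw [← Finset.Ico_add_one_right_eq_Icc]
      apply Finset.sum_congr rfl
      intro k hk
      rw [Finset.mem_Ico] at hk
      rw [hiter k (by omega) a,
        proj_iter j c Φ hΦn hsol φ₀ hφ₀n hnonchar Φ₀ hΦ₀ k (by omega) σ, smul_smul]
      rw [show ((σ, -φ₀ σ) : ℝ × ℝ) = (σ, a) from by rw [ha]]
      congr 1
      rw [div_mul_eq_mul_div, ← mul_pow]
      rw [ha]
      norm_num
  rw [show Φ (σ, 0) = f 0 from rfl, ← hsum]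
  exact lt_of_le_of_lt htaylor hstrict
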